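/- Let φ : ℂ → ℂ be continuous on all of ℂ, and for every R > 0 let the function s ↦ φ(√2 · R · 2^{s}) be holomorphic on {s | re s > 1/2} (where 2^{s} = exp(s log 2)). If additionally φ is bounded on a neighborhood of 0 minus {0}, then φ is entire. -/

import Mathlib

open Complex Filter

private lemma aux_diff_ne_zero (φ : ℂ → ℂ)
    (hhol : ∀ R : ℝ, 0 < R →
      DifferentiableOn ℂ
        (fun s => φ ((Real.sqrt 2 * R : ℝ) * Complex.exp (s * (Real.log 2 : ℂ))))
        {s : ℂ | 1 / 2 < s.re})
    {z : ℂ} (hz : z ≠ 0) : DifferentiableAt ℂ φ z := by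
  set R : ℝ := ‖z‖ / 4 with hR
  have hzpos : (0:ℝ) < ‖z‖ := norm_pos_iff.mpr hz
  have hRpos : 0 < R := by positivity
  set c : ℝ := Real.sqrt 2 * R with hc
  have hs2 : (0:ℝ) < Real.sqrt 2 := Real.sqrt_pos.mpr (by norm_num)
  have hcpos : 0 < c := by positivity
  have hcC : (c : ℂ) ≠ 0 := by exact_mod_cast hcpos.ne'
  -- choose sign u so that u * z / c is in the slit plane
  obtain ⟨u, hu2, hea, hmem⟩ :
      ∃ u : ℂ, u * u = 1 ∧ (∃ a : ℂ, Complex.exp a = u ∧ a.re = 0) ∧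
        u * z / c ∈ Complex.slitPlane := by
    by_cases hzs : 0 < z.re ∨ z.im ≠ 0
    · refine ⟨1, by ring, ⟨0, by simp, by simp⟩, ?_⟩
      rw [Complex.mem_slitPlane_iff]
      rcases hzs with h | h
      · left
        rw [one_mul, Complex.div_ofReal_re]
        positivity
      · right
        rw [one_mul, Complex.div_ofReal_im]
        exact div_ne_zero h hcpos.ne' 
    · push_neg at hzs
      refine ⟨-1, by ring, ⟨Real.pi * Complex.I, by simp [Complex.exp_pi_mul_I], by simp⟩, ?_⟩
      rw [Complex.mem_slitPlane_iff]
      left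
      have hre : z.re < 0 := by
        rcases lt_or_eq_of_le hzs.1 with h | h
        · exact h
        · exact absurd (by apply Complex.ext <;> simp [h, hzs.2]) hz
      rw [neg_one_mul, Complex.div_ofReal_re, Complex.neg_re]
      have : 0 < -z.re := by linarith
      positivity
  obtain ⟨a, hexpa, hare⟩ := hea
  have hune : u ≠ 0 := by
    intro h; rw [h, zero_mul] at hu2; exact one_ne_zero hu2.symm
  have hl2 : (0:ℝ) < Real.log 2 := Real.log_pos (by norm_num)
  have hl2C : ((Real.log 2 : ℝ) : ℂ) ≠ 0 := by exact_mod_cast hl2.ne'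
  -- local inverse
  set h : ℂ → ℂ := fun w => (Complex.log (u * w / c) + a) * ((Real.log 2 : ℝ) : ℂ)⁻¹ with hh
  have hdh : DifferentiableAt ℂ h z := by
    apply DifferentiableAt.mul_const
    apply DifferentiableAt.add_const
    exact (Complex.differentiableAt_log hmem).comp (f := fun w => u * w / (c:ℂ)) z (by fun_prop)
  -- h z lies in the half-plane
  have hre : 1 / 2 < (h z).re := by
    have habs : ‖u * z / c‖ = ‖z‖ / c := by
      rw [norm_div, norm_mul]
      have : ‖u‖ = 1 := by
        have := congrArg norm hu2
        rw [norm_mul, norm_one] at this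
        nlinarith [norm_nonneg u]
      simp [this, abs_of_pos hcpos]
    have hlog : (Complex.log (u * z / c)).re = Real.log (‖z‖ / c) := by
      rw [Complex.log_re, habs]
    have : (h z).re = Real.log (‖z‖ / c) / Real.log 2 := by
      simp only [hh]
      rw [show ((Real.log 2 : ℝ) : ℂ)⁻¹ = ((Real.log 2)⁻¹ : ℝ) by push_cast; ring]
      rw [Complex.mul_re, Complex.add_re, Complex.ofReal_re, Complex.ofReal_im, hlog, hare]
      simp [div_eq_mul_inv]
    rw [this, lt_div_iff₀ hl2]
    have h1 : ‖z‖ / c > Real.sqrt 2 := by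
      rw [hc, hR, gt_iff_lt, lt_div_iff₀ hcpos]
      have hs2sq : Real.sqrt 2 * Real.sqrt 2 = 2 := Real.mul_self_sqrt (by norm_num)
      calc Real.sqrt 2 * (Real.sqrt 2 * (‖z‖/4)) = 2 * (‖z‖/4) := by rw [← mul_assoc, hs2sq]
        _ < ‖z‖ := by linarith
    have h2 : Real.log (Real.sqrt 2) < Real.log (‖z‖ / c) :=
      Real.log_lt_log hs2 h1
    have h3 : Real.log (Real.sqrt 2) = Real.log 2 / 2 := by
      rw [Real.sqrt_eq_rpow, Real.log_rpow (by norm_num)]; ring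
    linarith
  -- F is the composed holomorphic function
  set F : ℂ → ℂ := fun s => φ ((Real.sqrt 2 * R : ℝ) * Complex.exp (s * (Real.log 2 : ℂ))) with hF
  have hFd : DifferentiableAt ℂ F (h z) := by
    have hopen : IsOpen {s : ℂ | 1 / 2 < s.re} := isOpen_lt continuous_const Complex.continuous_re
    exact (hhol R hRpos).differentiableAt (hopen.mem_nhds hre)
  -- φ agrees with F ∘ h near z
  have heq : φ =ᶠ[nhds z] F ∘ h := by
    filter_upwards [isOpen_compl_singleton.eventually_mem (show z ∈ ({0}ᶜ : Set ℂ) from hz)]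
      with w hw
    have hwne : w ≠ 0 := hw
    have harg : u * w / c ≠ 0 := by
      apply div_ne_zero (mul_ne_zero hune hwne) hcC
    simp only [Function.comp, hF, hh]
    congr 1
    have hcancel : ((Complex.log (u * w / (c:ℂ)) + a) * ((Real.log 2 : ℝ) : ℂ)⁻¹) *
        ((Real.log 2 : ℝ) : ℂ) = Complex.log (u * w / (c:ℂ)) + a := by
      rw [mul_assoc, inv_mul_cancel₀ hl2C, mul_one]
    rw [hcancel, Complex.exp_add, Complex.exp_log harg, hexpa]
    have hs2C : ((Real.sqrt 2 : ℝ) : ℂ) ≠ 0 := by exact_mod_cast hs2.ne'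
    have hRC : ((R : ℝ) : ℂ) ≠ 0 := by exact_mod_cast hRpos.ne'
    rw [hc]
    push_cast
    field_simp
    linear_combination (-1 : ℂ) * hu2
  exact (hFd.comp z hdh).congr_of_eventuallyEq heq

theorem stmt_16 (φ : ℂ → ℂ)
    (hcont : Continuous φ)
    (hhol : ∀ R : ℝ, 0 < R →
      DifferentiableOn ℂ
        (fun s => φ ((Real.sqrt 2 * R : ℝ) * Complex.exp (s * (Real.log 2 : ℂ))))
        {s : ℂ | 1 / 2 < s.re})
    (hbdd : ∃ δ > (0 : ℝ), ∃ M : ℝ, ∀ z : ℂ, z ≠ 0 → ‖z‖ < δ → ‖φ z‖ ≤ M) :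
    Differentiable ℂ φ := by
  intro z
  rcases eq_or_ne z 0 with rfl | hz
  · have hd : ∀ᶠ w in nhdsWithin 0 {(0:ℂ)}ᶜ, DifferentiableAt ℂ φ w := by
      filter_upwards [self_mem_nhdsWithin] with w hw
      exact aux_diff_ne_zero φ hhol hw
    exact (Complex.analyticAt_of_differentiable_on_punctured_nhds_of_continuousAt hd
      hcont.continuousAt).differentiableAt
  · exact aux_diff_ne_zero φ hhol hz
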